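/- Let m ≥ 1, let Q be an invertible symmetric real m×m matrix, and let e ∈ ℝ^m satisfy eᵀQe = 1. For x ∈ ℝ^m define the linear operator P_x : ℝ^m → ℝ^m by P_x = (xᵀQx)·I + 4(eᵀQx)·(x·eᵀQ) - 2·x·xᵀQ - 2(xᵀQx)·e·eᵀQ. Then det(P_x) = (xᵀQx)^m for every x ∈ ℝ^m. In particular, x is invertible in the quadratic factor Jordan algebra Jord_m(Q,e) if and only if xᵀQx ≠ 0. -/

import Mathlib

open Matrix

/-- In the quadratic factor Jordan algebra `Jord_m(Q,e)`, the quadratic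
representation `P_x = (xᵀQx)·I + 4(eᵀQx)·x·eᵀQ - 2·x·xᵀQ - 2(xᵀQx)·e·eᵀQ` has determinant
`(xᵀQx)^m`; in particular `x` is invertible (i.e. `det P_x ≠ 0`) iff `xᵀQx ≠ 0`. -/
theorem stmt_13 (m : ℕ) (hm : 1 ≤ m) (Q : Matrix (Fin m) (Fin m) ℝ)
    (hQsymm : Q.IsSymm) (hQdet : Q.det ≠ 0)
    (e : Fin m → ℝ) (he : e ⬝ᵥ Q.mulVec e = 1)
    (x : Fin m → ℝ) (P : (Fin m → ℝ) →ₗ[ℝ] (Fin m → ℝ))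
    (hP : ∀ v : Fin m → ℝ, P v = (x ⬝ᵥ Q.mulVec x) • v
        + (4 * (e ⬝ᵥ Q.mulVec x) * (e ⬝ᵥ Q.mulVec v)) • x
        - (2 * (x ⬝ᵥ Q.mulVec v)) • x
        - (2 * (x ⬝ᵥ Q.mulVec x) * (e ⬝ᵥ Q.mulVec v)) • e) :
    LinearMap.det P = (x ⬝ᵥ Q.mulVec x) ^ m
    ∧ (LinearMap.det P ≠ 0 ↔ x ⬝ᵥ Q.mulVec x ≠ 0) := by
  classical
  set q : ℝ := x ⬝ᵥ Q.mulVec x with hq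
  set α : ℝ := e ⬝ᵥ Q.mulVec x with hα
  set a : Fin m → ℝ := Q.vecMul e with ha
  set b : Fin m → ℝ := Q.vecMul x with hb
  have hav : ∀ v, e ⬝ᵥ Q.mulVec v = a ⬝ᵥ v := fun v => Matrix.dotProduct_mulVec e Q v
  have hbv : ∀ v, x ⬝ᵥ Q.mulVec v = b ⬝ᵥ v := fun v => Matrix.dotProduct_mulVec x Q v
  have hax : a ⬝ᵥ x = α := (hav x).symm
  have hbx : b ⬝ᵥ x = q := (hbv x).symm
  have hae : a ⬝ᵥ e = 1 := by rw [← hav e]; exact he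
  have hbe : b ⬝ᵥ e = α := by
    rw [← hbv e, hα, Matrix.dotProduct_mulVec, ← Matrix.mulVec_transpose, hQsymm.eq,
      dotProduct_comm]
  set w : Fin m → ℝ := fun j => 4*α*a j - 2*b j with hw
  set U : Matrix (Fin m) (Fin 2) ℝ := Matrix.of fun i => ![x i, e i] with hU
  set V : Matrix (Fin 2) (Fin m) ℝ := Matrix.of ![w, fun j => -2*q*a j] with hV
  set M : Matrix (Fin m) (Fin m) ℝ := q • (1 : Matrix (Fin m) (Fin m) ℝ) + U * V with hM
  have hUmul : ∀ y : Fin 2 → ℝ, U.mulVec y = fun i => x i * y 0 + e i * y 1 := by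
    intro y; funext i
    simp [hU, Matrix.mulVec, dotProduct, Fin.sum_univ_two]
  have hVmul : ∀ v : Fin m → ℝ, V.mulVec v = ![4*α*(a ⬝ᵥ v) - 2*(b ⬝ᵥ v), -2*q*(a ⬝ᵥ v)] := by
    intro v; funext k
    fin_cases k
    · simp only [hV, hw, Matrix.mulVec, dotProduct, Matrix.of_apply,
        Matrix.cons_val_zero, Fin.isValue, Finset.mul_sum]
      rw [← Finset.sum_sub_distrib]
      refine Finset.sum_congr rfl fun j _ => ?_
      simp only [Fin.mk_zero, Matrix.cons_val_zero]
      ring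
    · simp only [hV, Matrix.mulVec, dotProduct, Matrix.of_apply,
        Matrix.cons_val_one, Matrix.head_cons, Fin.isValue, Finset.mul_sum]
      refine Finset.sum_congr rfl fun j _ => ?_
      simp only [Fin.mk_one, Matrix.cons_val_one, Matrix.head_cons, Matrix.cons_val_zero]
      ring
  have hPM : LinearMap.det P = M.det := by
    have hPt : P = Matrix.toLin' M := by
      apply LinearMap.ext; intro v
      rw [hP v, hav, hbv, Matrix.toLin'_apply, hM, Matrix.add_mulVec,
        Matrix.smul_mulVec, Matrix.one_mulVec, ← Matrix.mulVec_mulVec, hVmul, hUmul]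
      funext i
      simp only [Pi.add_apply, Pi.sub_apply, Pi.smul_apply, smul_eq_mul,
        Matrix.cons_val_zero, Matrix.cons_val_one, Matrix.head_cons]
      ring
    rw [hPt, LinearMap.det_toLin']
  have key : ∀ (c1 c2 : ℝ) (u : Fin m → ℝ),
      ∑ k, (c1 * a k + c2 * b k) * u k = c1 * (a ⬝ᵥ u) + c2 * (b ⬝ᵥ u) := by
    intro c1 c2 u
    rw [dotProduct, dotProduct, Finset.mul_sum, Finset.mul_sum,
      ← Finset.sum_add_distrib]
    exact Finset.sum_congr rfl fun k _ => by ring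
  have hwx : ∑ k, w k * x k = 4*α*α - 2*q := by
    have h2 : ∑ k, w k * x k = ∑ k, ((4*α) * a k + (-2) * b k) * x k :=
      Finset.sum_congr rfl fun k _ => by simp only [hw]; ring
    rw [h2, key, hax, hbx]; ring
  have hwe : ∑ k, w k * e k = 2*α := by
    have h2 : ∑ k, w k * e k = ∑ k, ((4*α) * a k + (-2) * b k) * e k :=
      Finset.sum_congr rfl fun k _ => by simp only [hw]; ring
    rw [h2, key, hae, hbe]; ring
  have hqax : ∑ k, (-2*q*a k) * x k = -2*q*α := by
    have h2 : ∑ k, (-2*q*a k) * x k = ∑ k, ((-2*q) * a k + 0 * b k) * x k :=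
      Finset.sum_congr rfl fun k _ => by ring
    rw [h2, key, hax, hbx]; ring
  have hqae : ∑ k, (-2*q*a k) * e k = -2*q := by
    have h2 : ∑ k, (-2*q*a k) * e k = ∑ k, ((-2*q) * a k + 0 * b k) * e k :=
      Finset.sum_congr rfl fun k _ => by ring
    rw [h2, key, hae, hbe]; ring
  have hdet : M.det = q ^ m := by
    by_cases hq0 : q = 0
    · have hM0 : M = Matrix.diagonal x * Matrix.of (fun _ j => w j) := by
        ext i j
        rw [Matrix.diagonal_mul]
        simp only [hM, hq0, zero_smul, zero_add, Matrix.mul_apply, Fin.sum_univ_two,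
          hU, hV, Matrix.of_apply, Matrix.cons_val_zero, Matrix.cons_val_one,
          Matrix.head_cons]
        ring
      rcases eq_or_lt_of_le hm with hm1 | hm2
      · subst hm1
        have hx0 : x 0 = 0 := by
          have hQ00 : Q 0 0 ≠ 0 := by
            rwa [Matrix.det_fin_one] at hQdet
          have : x 0 * (Q 0 0 * x 0) = 0 := by
            have := hq0
            rw [hq] at this
            simpa [dotProduct, Matrix.mulVec, Fin.sum_univ_one] using this
          rcases mul_eq_zero.mp this with h | h
          · exact h
          · rcases mul_eq_zero.mp h with h' | h'
            · exact absurd h' hQ00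
            · exact h'
        rw [hM0, Matrix.det_mul, Matrix.det_diagonal]
        simp [hx0, hq0]
      · have h01 : (⟨0, by omega⟩ : Fin m) ≠ ⟨1, by omega⟩ := by
          simp [Fin.ext_iff]
        have hW : (Matrix.of (fun _ j => w j) : Matrix (Fin m) (Fin m) ℝ).det = 0 :=
          Matrix.det_zero_of_row_eq h01 rfl
        rw [hM0, Matrix.det_mul, hW, mul_zero, hq0, zero_pow (by omega)]
    · have hM2 : M = q • ((1 : Matrix (Fin m) (Fin m) ℝ) + U * (q⁻¹ • V)) := by
        rw [smul_add, Matrix.mul_smul, smul_smul, mul_inv_cancel₀ hq0, one_smul, hM]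
      have hVU : V * U = !![4*α*α - 2*q, 2*α; -2*q*α, -2*q] := by
        ext i j
        fin_cases i <;> fin_cases j <;>
          simp only [Matrix.mul_apply, hU, hV, Matrix.of_apply, Fin.mk_zero, Fin.mk_one,
            Matrix.cons_val_zero, Matrix.cons_val_one, Matrix.head_cons,
            Matrix.cons_val', Matrix.empty_val', Matrix.cons_val_fin_one,
            Matrix.head_fin_const]
        · exact hwx
        · exact hwe
        · exact hqax
        · exact hqae
      rw [hM2, Matrix.det_smul, Fintype.card_fin, Matrix.det_one_add_mul_comm,
        Matrix.smul_mul, hVU]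
      have : ((1 : Matrix (Fin 2) (Fin 2) ℝ)
          + q⁻¹ • !![4*α*α - 2*q, 2*α; -2*q*α, -2*q]).det = 1 := by
        rw [Matrix.det_fin_two]
        simp only [Matrix.add_apply, Matrix.smul_apply, Matrix.one_apply_eq, Matrix.of_apply,
          Matrix.one_apply_ne (by decide : (0:Fin 2) ≠ 1),
          Matrix.one_apply_ne (by decide : (1:Fin 2) ≠ 0),
          Matrix.cons_val_zero, Matrix.cons_val_one, Matrix.head_cons,
          Matrix.cons_val', Matrix.empty_val', Matrix.cons_val_fin_one,
          Matrix.head_fin_const, smul_eq_mul]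
        field_simp
        ring
      rw [this, mul_one]
  refine ⟨hPM.trans hdet, ?_⟩
  rw [hPM, hdet]
  exact pow_ne_zero_iff (by omega)
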